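/- Under the hypotheses of the Matrix Perturbation Lemma, the perturbed products admit strongly contracted directions: For every κ ∈ (0, 5] there exists b₀ ∈ (0, κ) such that for every b ∈ (0, b₀) there exists λ with b < λ < min(1, κ) with the following property. Let n ≥ 1, let v ∈ ℝ² be a unit vector, and let A₁, …, Aₙ and A₁′, …, Aₙ′ be 2×2 real matrices with det Aᵢ = b, det Aᵢ′ = b, ‖Aᵢ‖ ≤ 5 and ‖Aᵢ′‖ ≤ 5 for all 1 ≤ i ≤ n. If ‖Aⁱ v‖ ≥ κⁱ and ‖Aᵢ − Aᵢ′‖ < λⁱ for all 1 ≤ i ≤ n, then for every 1 ≤ i ≤ n there exists a unit vector eᵢ ∈ ℝ² with ‖A′ⁱ eᵢ‖ ≤ 2 (b/κ)ⁱ. -/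

import Mathlib

open scoped RealInnerProductSpace
set_option linter.unusedSectionVars false


noncomputable section

/-- The Euclidean plane. -/
abbrev E2 := EuclideanSpace ℝ (Fin 2)

/-- Given a sequence of linear maps `A₁, A₂, …` on the plane, `matProd A i = Aᵢ ⋯ A₂ A₁`
(with `matProd A 0 = id`). -/
def matProd (A : ℕ → (E2 →L[ℝ] E2)) : ℕ → (E2 →L[ℝ] E2)
  | 0 => ContinuousLinearMap.id ℝ E2
  | (i + 1) => (A (i + 1)).comp (matProd A i)

namespace MPL

def cross (x y : E2) : ℝ := x 0 * y 1 - x 1 * y 0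

lemma inner_coords (x y : E2) : ⟪x, y⟫ = x 0 * y 0 + x 1 * y 1 := by
  simp [PiLp.inner_apply, Fin.sum_univ_two, RCLike.inner_apply, mul_comm]

lemma norm_sq_coords (x : E2) : ‖x‖ ^ 2 = x 0 ^ 2 + x 1 ^ 2 := by
  have h := real_inner_self_eq_norm_sq x
  rw [inner_coords] at h
  nlinarith [h]

lemma lagrange (x y : E2) : ⟪x, y⟫ ^ 2 + cross x y ^ 2 = (‖x‖ * ‖y‖) ^ 2 := by
  rw [inner_coords]
  have hx := norm_sq_coords x
  have hy := norm_sq_coords y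
  unfold cross
  nlinarith [hx, hy]

lemma abs_cross_le (x y : E2) : |cross x y| ≤ ‖x‖ * ‖y‖ := by
  have h := lagrange x y
  have h2 : (0:ℝ) ≤ ‖x‖ * ‖y‖ := by positivity
  nlinarith [abs_nonneg (cross x y), sq_abs (cross x y), sq_nonneg ⟪x, y⟫]

lemma cross_add_right (x y z : E2) : cross x (y + z) = cross x y + cross x z := by
  unfold cross; simp [PiLp.add_apply]; ring

lemma decomp (x : E2) : x = x 0 • EuclideanSpace.single 0 (1:ℝ) + x 1 • EuclideanSpace.single 1 (1:ℝ) := by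
  ext k
  fin_cases k <;> simp [EuclideanSpace.single_apply]

lemma apply_coord (M : E2 →L[ℝ] E2) (x : E2) (k : Fin 2) :
    (M x) k = x 0 * (M (EuclideanSpace.single 0 (1:ℝ))) k + x 1 * (M (EuclideanSpace.single 1 (1:ℝ))) k := by
  conv_lhs => rw [decomp x]
  simp [PiLp.add_apply, PiLp.smul_apply]

lemma cross_map (M : E2 →L[ℝ] E2) (x y : E2) :
    cross (M x) (M y) = LinearMap.det (M : E2 →ₗ[ℝ] E2) * cross x y := by
  classical
  have hdet : LinearMap.det (M : E2 →ₗ[ℝ] E2) =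
      (M (EuclideanSpace.single 0 (1:ℝ))) 0 * (M (EuclideanSpace.single 1 (1:ℝ))) 1
      - (M (EuclideanSpace.single 0 (1:ℝ))) 1 * (M (EuclideanSpace.single 1 (1:ℝ))) 0 := by
    rw [← LinearMap.det_toMatrix (EuclideanSpace.basisFun (Fin 2) ℝ).toBasis, Matrix.det_fin_two]
    simp [LinearMap.toMatrix_apply, EuclideanSpace.basisFun_apply]
    ring
  unfold cross
  rw [apply_coord M x 0, apply_coord M x 1, apply_coord M y 0, apply_coord M y 1, hdet]
  ring

set_option maxHeartbeats 1000000 in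
lemma exists_contracted (M : E2 →L[ℝ] E2) (v : E2) (hv : ‖v‖ = 1) (m : ℝ) (hm : 0 < m)
    (h : m ≤ ‖M v‖) :
    ∃ e : E2, ‖e‖ = 1 ∧ ‖M e‖ ≤ |LinearMap.det (M : E2 →ₗ[ℝ] E2)| / m := by
  classical
  set u : E2 := (ContinuousLinearMap.adjoint M) (M v) with hu
  have hadj : ∀ e : E2, ⟪M e, M v⟫ = ⟪e, u⟫ := by
    intro e
    rw [hu, ContinuousLinearMap.adjoint_inner_right]
  have hune : u ≠ 0 := by
    intro h0
    have h1 : ⟪M v, M v⟫ = 0 := by rw [hadj v, h0, inner_zero_right]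
    have h2 : ‖M v‖ = 0 := by
      have := real_inner_self_eq_norm_sq (M v)
      nlinarith [this]
    nlinarith
  have hnu : (0:ℝ) < ‖u‖ := norm_pos_iff.mpr hune
  set p : E2 := (-(u 1)) • EuclideanSpace.single 0 (1:ℝ) + (u 0) • EuclideanSpace.single 1 (1:ℝ) with hp
  have hp0 : p 0 = -(u 1) := by simp [hp, EuclideanSpace.single_apply]
  have hp1 : p 1 = u 0 := by simp [hp, EuclideanSpace.single_apply]
  have hnp : ‖p‖ = ‖u‖ := by
    have h1 := norm_sq_coords p
    have h2 := norm_sq_coords u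
    rw [hp0, hp1] at h1
    nlinarith [norm_nonneg p, norm_nonneg u]
  set e : E2 := ‖u‖⁻¹ • p with he
  have hne : ‖e‖ = 1 := by
    rw [he, norm_smul]
    simp [hnp, abs_of_nonneg (le_of_lt hnu)]
    field_simp
  refine ⟨e, hne, ?_⟩
  have horth : ⟪M e, M v⟫ = 0 := by
    rw [hadj e, he, inner_coords]
    simp [PiLp.smul_apply, hp0, hp1]
    ring
  have hL := lagrange (M e) (M v)
  rw [horth] at hL
  have hcr : cross (M e) (M v) = LinearMap.det (M : E2 →ₗ[ℝ] E2) * cross e v := cross_map M e v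
  have hbd : |cross e v| ≤ 1 := by
    have := abs_cross_le e v
    rw [hne, hv] at this
    simpa using this
  have key : ‖M e‖ * ‖M v‖ ≤ |LinearMap.det (M : E2 →ₗ[ℝ] E2)| := by
    have h1 : (‖M e‖ * ‖M v‖) ^ 2 = cross (M e) (M v) ^ 2 := by nlinarith [hL]
    have h2 : |cross (M e) (M v)| ≤ |LinearMap.det (M : E2 →ₗ[ℝ] E2)| := by
      rw [hcr, abs_mul]
      calc |LinearMap.det (M : E2 →ₗ[ℝ] E2)| * |cross e v|
          ≤ |LinearMap.det (M : E2 →ₗ[ℝ] E2)| * 1 := mul_le_mul_of_nonneg_left hbd (abs_nonneg _)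
        _ = _ := by ring
    nlinarith [abs_nonneg (cross (M e) (M v)), sq_abs (cross (M e) (M v)),
      mul_nonneg (norm_nonneg (M e)) (norm_nonneg (M v)), abs_nonneg (LinearMap.det (M : E2 →ₗ[ℝ] E2))]
  have hMv : (0:ℝ) < ‖M v‖ := lt_of_lt_of_le hm h
  rw [le_div_iff₀ hm]
  calc ‖M e‖ * m ≤ ‖M e‖ * ‖M v‖ := by nlinarith [norm_nonneg (M e)]
    _ ≤ _ := key

lemma matProd_succ_apply (A : ℕ → (E2 →L[ℝ] E2)) (j : ℕ) (v : E2) :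
    matProd A (j+1) v = A (j+1) (matProd A j v) := by
  simp [matProd]

lemma det_matProd (A : ℕ → (E2 →L[ℝ] E2)) (b : ℝ) (n : ℕ)
    (h : ∀ i : ℕ, 1 ≤ i → i ≤ n → LinearMap.det ((A i : E2 →L[ℝ] E2) : E2 →ₗ[ℝ] E2) = b) :
    ∀ j, j ≤ n → LinearMap.det ((matProd A j : E2 →L[ℝ] E2) : E2 →ₗ[ℝ] E2) = b ^ j := by
  intro j
  induction j with
  | zero => intro _; simp [matProd]
  | succ k ih =>
    intro hk
    have h1 : LinearMap.det ((A (k+1) : E2 →L[ℝ] E2) : E2 →ₗ[ℝ] E2) = b :=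
      h (k+1) (Nat.succ_le_succ (Nat.zero_le k)) hk
    have h2 := ih (Nat.le_of_succ_le hk)
    show LinearMap.det (((A (k+1)).comp (matProd A k) : E2 →L[ℝ] E2) : E2 →ₗ[ℝ] E2) = b ^ (k+1)
    rw [ContinuousLinearMap.toLinearMap_comp, LinearMap.det_comp, h1, h2, pow_succ]
    ring

lemma norm_matProd_le (A : ℕ → (E2 →L[ℝ] E2)) (v : E2) (hv : ‖v‖ = 1) (n : ℕ)
    (h : ∀ i : ℕ, 1 ≤ i → i ≤ n → ‖A i‖ ≤ 5) :
    ∀ j, j ≤ n → ‖matProd A j v‖ ≤ 5 ^ j := by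
  intro j
  induction j with
  | zero => intro _; simp [matProd, hv]
  | succ k ih =>
    intro hk
    have h2 := ih (Nat.le_of_succ_le hk)
    rw [matProd_succ_apply]
    calc ‖A (k+1) (matProd A k v)‖ ≤ ‖A (k+1)‖ * ‖matProd A k v‖ := (A (k+1)).le_opNorm _
      _ ≤ 5 * 5 ^ k :=
          mul_le_mul (h (k+1) (Nat.succ_le_succ (Nat.zero_le k)) hk) h2 (norm_nonneg _) (by norm_num)
      _ = 5 ^ (k+1) := (pow_succ' 5 k).symm

lemma pow_succ_le (x y ε : ℝ) (hx : 0 ≤ x) (hy : 0 ≤ y) (hε0 : 0 ≤ ε) (hε1 : ε ≤ 1)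
    (h : x ≤ y * ε) (m : ℕ) : x ^ (m+1) ≤ y ^ (m+1) * ε := by
  have hk : x ^ (m+1) ≤ (y * ε) ^ (m+1) := pow_le_pow_left₀ hx h (m+1)
  have he : ε ^ m ≤ 1 := pow_le_one₀ hε0 hε1
  have hyp : (0:ℝ) ≤ y ^ (m+1) := pow_nonneg hy _
  have hee : ε ^ (m+1) ≤ ε := by
    calc ε ^ (m+1) = ε ^ m * ε := pow_succ ε m
      _ ≤ 1 * ε := mul_le_mul_of_nonneg_right he hε0
      _ = ε := one_mul ε
  calc x ^ (m+1) ≤ (y * ε) ^ (m+1) := hk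
    _ = y ^ (m+1) * ε ^ (m+1) := mul_pow y ε (m+1)
    _ ≤ y ^ (m+1) * ε := mul_le_mul_of_nonneg_left hee hyp

section Numeric

variable {κ b : ℝ}

lemma kappa4 (hκ0 : 0 < κ) (hκ5 : κ ≤ 5) : κ^4 ≤ 125*κ := by nlinarith [pow_le_pow_left₀ (le_of_lt hκ0) hκ5 3, hκ0]

lemma NQ (hκ0 : 0 < κ) (hκ5 : κ ≤ 5) (hb0 : 0 < b) (hbκ : b ≤ κ^4/100000) (k : ℕ) : (50*b)^k - b^k ≤ (3/4) * (κ^k * κ^k) := by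
  have hkk : κ^k * κ^k = (κ^2)^k := by rw [← mul_pow, sq]
  rw [hkk]
  cases k with
  | zero => norm_num
  | succ m =>
    have h1 : (50*b) ≤ (κ^2) * (κ^2/2000) := by nlinarith
    have h2 : (50*b)^(m+1) ≤ (κ^2)^(m+1) * (κ^2/2000) :=
      pow_succ_le _ _ _ (by positivity) (by positivity) (by positivity) (by nlinarith) h1 m
    have h3 : (0:ℝ) < b^(m+1) := pow_pos hb0 _
    have hκ2 : κ^2 ≤ 25 := by nlinarith
    have hp : (0:ℝ) ≤ (κ^2)^(m+1) := pow_nonneg (sq_nonneg κ) (m+1)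
    have h9 : (κ^2)^(m+1) * (κ^2/2000) ≤ (κ^2)^(m+1) * (3/4) :=
      mul_le_mul_of_nonneg_left (by linarith) hp
    linarith

lemma N2 (hκ0 : 0 < κ) (hκ5 : κ ≤ 5) (hb0 : 0 < b) (hbκ : b ≤ κ^4/100000) (k : ℕ) :
    5*((50*b)^k - b^k) + (2*b)^(k+1)*(2*(5^k*5^k)) ≤ (1/2)^(k+3) * (κ^(k+1) * κ^k) := by
  have h25 : (5:ℝ)^k*5^k = 25^k := by rw [← mul_pow]; norm_num
  have e1 : (2*b)^(k+1)*(2*((5:ℝ)^k*5^k)) = 4*b*(50*b)^k := by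
    rw [h25]
    simp only [mul_pow, pow_succ, show (50:ℝ) = 2*25 by norm_num]
    ring
  have e2 : κ^(k+1) * κ^k = κ * (κ^2)^k := by ring
  rw [e1, e2]
  have hb1 : b ≤ 1/100 := by nlinarith [kappa4 hκ0 hκ5]
  cases k with
  | zero => simp; nlinarith [kappa4 hκ0 hκ5]
  | succ m =>
    have h1 : (50*b) ≤ (κ^2/2) * (κ^2/1000) := by nlinarith
    have h2 : (50*b)^(m+1) ≤ (κ^2/2)^(m+1) * (κ^2/1000) :=
      pow_succ_le _ _ _ (by positivity) (by positivity) (by positivity) (by nlinarith) h1 m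
    have e3 : ((1:ℝ)/2)^(m+1+3) * (κ * (κ^2)^(m+1)) = (1/8) * κ * ((κ^2/2)^(m+1)) := by
      ring
    rw [e3]
    have h4 : (0:ℝ) < b^(m+1) := pow_pos hb0 _
    have h5 : (0:ℝ) ≤ (κ^2/2)^(m+1) := by positivity
    -- LHS ≤ (5 + 4b)(50b)^{m+1} ≤ 6 (50b)^{m+1} ≤ 6 (κ²/2)^{m+1} κ²/1000 ≤ (κ/16)(κ²/2)^{m+1} ... 
    have h6 : 5*((50*b)^(m+1) - b^(m+1)) + 4*b*(50*b)^(m+1) ≤ 6*(50*b)^(m+1) := by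
      nlinarith [pow_nonneg (by positivity : (0:ℝ) ≤ 50*b) (m+1)]
    have h7 : 6*(50*b)^(m+1) ≤ 6*((κ^2/2)^(m+1) * (κ^2/1000)) := by nlinarith
    have h8 : 6*((κ^2/2)^(m+1) * (κ^2/1000)) ≤ (1/8) * κ * ((κ^2/2)^(m+1)) := by
      have : κ^2 ≤ 5*κ := by nlinarith
      nlinarith [h5]
    linarith

lemma N1 (hb0 : 0 < b) (k : ℕ) :
    b*((50*b)^k - b^k) + 5^(k+1)*((2*b)^(k+1)*(2*(5:ℝ)^k)) ≤ (50*b)^(k+1) - b^(k+1) := by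
  have e1 : (5:ℝ)^(k+1)*((2*b)^(k+1)*(2*5^k)) = 20*b*(50*b)^k := by
    simp only [mul_pow, pow_succ, show (50:ℝ) = 2*5*5 by norm_num]
    ring
  rw [e1]
  have h1 : (0:ℝ) ≤ (50*b)^k := by positivity
  have e2 : (50*b)^(k+1) = 50*b*(50*b)^k := by rw [pow_succ]; ring
  have e3 : b^(k+1) = b*b^k := by rw [pow_succ]; ring
  rw [e2, e3]
  nlinarith

end Numeric

section Main
variable {κ b : ℝ} (hκ0 : 0 < κ) (hκ5 : κ ≤ 5) (hb0 : 0 < b) (hbκ : b ≤ κ^4/100000)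
variable (n : ℕ) (v : E2) (hv : ‖v‖ = 1) (A A' : ℕ → (E2 →L[ℝ] E2))
variable (hAs : ∀ i : ℕ, 1 ≤ i → i ≤ n →
      LinearMap.det (A i : E2 →ₗ[ℝ] E2) = b ∧ LinearMap.det (A' i : E2 →ₗ[ℝ] E2) = b ∧
      ‖A i‖ ≤ 5 ∧ ‖A' i‖ ≤ 5)
variable (hgrow : ∀ i : ℕ, 1 ≤ i → i ≤ n → κ ^ i ≤ ‖matProd A i v‖ ∧ ‖A i - A' i‖ < (2*b) ^ i)

include hκ0 hκ5 hb0 hbκ hv hAs hgrow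

set_option maxHeartbeats 2000000 in
lemma key_induction :
    ∀ j, j ≤ n →
      |cross (matProd A j v) (matProd A' j v)| ≤ (50*b)^j - b^j ∧
      |⟪matProd A' j v, matProd A j v⟫ - ‖matProd A j v‖^2| ≤
        (1/4) * (1 - (1/2)^j) * ‖matProd A j v‖^2 := by
  have hwlow : ∀ j, j ≤ n → κ^j ≤ ‖matProd A j v‖ := by
    intro j hj
    cases j with
    | zero => simp [matProd, hv]
    | succ k => exact (hgrow (k+1) (Nat.succ_le_succ (Nat.zero_le k)) hj).1
  have hwup : ∀ j, j ≤ n → ‖matProd A j v‖ ≤ 5^j :=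
    norm_matProd_le A v hv n (fun i h1 h2 => (hAs i h1 h2).2.2.1)
  intro j
  induction j with
  | zero =>
    intro _
    have h0 : matProd A 0 v = v := rfl
    have h0' : matProd A' 0 v = v := rfl
    constructor
    · rw [h0, h0', show cross v v = 0 from by unfold cross; ring]
      simp
    · rw [h0, h0', real_inner_self_eq_norm_sq]
      simp
  | succ k ih =>
    intro hk
    obtain ⟨hQ, hP⟩ := ih (Nat.le_of_succ_le hk)
    set W : E2 := matProd A k v with hW
    set W1 : E2 := matProd A (k+1) v with hW1
    set W' : E2 := matProd A' k v with hW'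
    set W1' : E2 := matProd A' (k+1) v with hW1'
    have hk1 : κ^k ≤ ‖W‖ := hwlow k (Nat.le_of_succ_le hk)
    have hk2 : κ^(k+1) ≤ ‖W1‖ := hwlow (k+1) hk
    have hup : ‖W‖ ≤ 5^k := hwup k (Nat.le_of_succ_le hk)
    have hup1 : ‖W1‖ ≤ 5^(k+1) := hwup (k+1) hk
    have hWpos : (0:ℝ) < ‖W‖ := lt_of_lt_of_le (pow_pos hκ0 k) hk1
    have hW1pos : (0:ℝ) < ‖W1‖ := lt_of_lt_of_le (pow_pos hκ0 (k+1)) hk2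
    have hA5 : ‖A (k+1)‖ ≤ 5 := (hAs (k+1) (Nat.succ_le_succ (Nat.zero_le k)) hk).2.2.1
    have hdetA : LinearMap.det ((A (k+1) : E2 →L[ℝ] E2) : E2 →ₗ[ℝ] E2) = b :=
      (hAs (k+1) (Nat.succ_le_succ (Nat.zero_le k)) hk).1
    have hpert : ‖A (k+1) - A' (k+1)‖ < (2*b)^(k+1) :=
      (hgrow (k+1) (Nat.succ_le_succ (Nat.zero_le k)) hk).2
    -- ‖W'‖ ≤ 2 ‖W‖
    have hLag : ⟪W', W⟫^2 + cross W' W ^ 2 = (‖W'‖*‖W‖)^2 := lagrange W' W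
    have hcrsym : cross W' W ^ 2 = cross W W' ^ 2 := by unfold cross; ring
    have hPabs : |⟪W', W⟫| ≤ (5/4)*‖W‖^2 := by
      have h1 := abs_le.mp hP
      have h2 : (0:ℝ) ≤ (1/2)^k := by positivity
      have h3 : ((1:ℝ)/2)^k ≤ 1 := pow_le_one₀ (by norm_num) (by norm_num)
      rw [abs_le]
      constructor <;> nlinarith [sq_nonneg ‖W‖]
    have hQ34 : |cross W W'| ≤ (3/4)*‖W‖^2 := by
      have h1 := NQ hκ0 hκ5 hb0 hbκ k
      have h2 : κ^k*κ^k ≤ ‖W‖^2 := by nlinarith [pow_pos hκ0 k]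
      nlinarith [hQ]
    have hW'le : ‖W'‖ ≤ 2*‖W‖ := by
      have h1 : (‖W'‖*‖W‖)^2 ≤ (|⟪W', W⟫| + |cross W W'|)^2 := by
        nlinarith [sq_abs ⟪W', W⟫, sq_abs (cross W W'), abs_nonneg ⟪W', W⟫,
          abs_nonneg (cross W W'), hLag, hcrsym]
      have h2 : ‖W'‖*‖W‖ ≤ |⟪W', W⟫| + |cross W W'| := by
        nlinarith [mul_nonneg (norm_nonneg W') (norm_nonneg W), abs_nonneg ⟪W', W⟫,
          abs_nonneg (cross W W')]
      nlinarith [hPabs, hQ34, hWpos]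
    -- the perturbation vector
    set ζ : E2 := (A' (k+1) - A (k+1)) W' with hζdef
    have hζ : ‖ζ‖ ≤ (2*b)^(k+1) * (2*‖W‖) := by
      have h1 : ‖ζ‖ ≤ ‖A' (k+1) - A (k+1)‖ * ‖W'‖ := (A' (k+1) - A (k+1)).le_opNorm W'
      have h2 : ‖A' (k+1) - A (k+1)‖ ≤ (2*b)^(k+1) := by
        rw [norm_sub_rev]; exact le_of_lt hpert
      calc ‖ζ‖ ≤ ‖A' (k+1) - A (k+1)‖ * ‖W'‖ := h1
        _ ≤ (2*b)^(k+1) * (2*‖W‖) := by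
            apply mul_le_mul h2 hW'le (norm_nonneg _) (by positivity)
    have hsplit : W1' = A (k+1) W' + ζ := by
      rw [hW1', matProd_succ_apply, hζdef, ← hW']
      simp [ContinuousLinearMap.sub_apply]
    have hW1A : W1 = A (k+1) W := by rw [hW1, matProd_succ_apply, ← hW]
    -- Q step
    have hQ1 : |cross W1 W1'| ≤ (50*b)^(k+1) - b^(k+1) := by
      have hid : cross W1 W1' = b * cross W W' + cross W1 ζ := by
        rw [hsplit, cross_add_right]
        congr 1
        rw [hW1A, cross_map, hdetA]
      have h1 : |cross W1 W1'| ≤ b * |cross W W'| + ‖W1‖*‖ζ‖ := by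
        rw [hid]
        calc |b * cross W W' + cross W1 ζ| ≤ |b * cross W W'| + |cross W1 ζ| := abs_add_le _ _
          _ ≤ b * |cross W W'| + ‖W1‖*‖ζ‖ := by
              rw [abs_mul, abs_of_pos hb0]
              exact add_le_add le_rfl (abs_cross_le W1 ζ)
      have h2 : ‖W1‖*‖ζ‖ ≤ 5^(k+1)*((2*b)^(k+1)*(2*(5:ℝ)^k)) := by
        apply mul_le_mul hup1 _ (norm_nonneg _) (by positivity)
        calc ‖ζ‖ ≤ (2*b)^(k+1) * (2*‖W‖) := hζ
          _ ≤ (2*b)^(k+1)*(2*(5:ℝ)^k) := by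
              apply mul_le_mul_of_nonneg_left (by linarith) (by positivity)
      have h3 := N1 hb0 k
      calc |cross W1 W1'| ≤ b * |cross W W'| + ‖W1‖*‖ζ‖ := h1
        _ ≤ b*((50*b)^k - b^k) + 5^(k+1)*((2*b)^(k+1)*(2*(5:ℝ)^k)) := by
            have : b * |cross W W'| ≤ b*((50*b)^k - b^k) :=
              mul_le_mul_of_nonneg_left hQ (le_of_lt hb0)
            linarith
        _ ≤ (50*b)^(k+1) - b^(k+1) := h3
    -- P step
    refine ⟨hQ1, ?_⟩
    set c : ℝ := ⟪W', W⟫ / ‖W‖^2 with hc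
    set r : E2 := W' - c • W with hr
    have hra : W' = c • W + r := by rw [hr]; abel
    have hrw : ‖r‖ * ‖W‖ = |cross W W'| := by
      have hnz : ‖W‖^2 ≠ 0 := by positivity
      have h1 : ‖r‖^2 = ‖W'‖^2 - 2*(c*⟪W', W⟫) + c^2*‖W‖^2 := by
        rw [hr, norm_sub_sq_real, real_inner_smul_right, norm_smul]
        simp [mul_pow, sq_abs]
        try ring
      have h2 : (‖r‖*‖W‖)^2 = |cross W W'|^2 := by
        rw [sq_abs]
        have hcP : c * ‖W‖^2 = ⟪W', W⟫ := by rw [hc]; field_simp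
        have hL2 : ⟪W', W⟫^2 + cross W W' ^2 = ‖W'‖^2*‖W‖^2 := by
          have := lagrange W' W
          rw [hcrsym] at this
          nlinarith [this]
        nlinarith [h1, hcP, hL2]
      calc ‖r‖ * ‖W‖ = √((‖r‖*‖W‖)^2) := (Real.sqrt_sq (by positivity)).symm
        _ = √(|cross W W'|^2) := by rw [h2]
        _ = |cross W W'| := Real.sqrt_sq (abs_nonneg _)
    have hPid : ⟪W1', W1⟫ = c*‖W1‖^2 + ⟪A (k+1) r, W1⟫ + ⟪ζ, W1⟫ := by
      rw [hsplit, inner_add_left]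
      have : A (k+1) W' = c • W1 + A (k+1) r := by
        rw [hra, map_add, map_smul, hW1A]
      rw [this, inner_add_left, real_inner_smul_left, real_inner_self_eq_norm_sq]
    have hc1 : |c - 1| ≤ (1/4)*(1-(1/2)^k) := by
      have hnz : (0:ℝ) < ‖W‖^2 := by positivity
      have h1 : |c - 1| * ‖W‖^2 = |⟪W', W⟫ - ‖W‖^2| := by
        rw [← abs_of_pos hnz, ← abs_mul]
        congr 1
        rw [hc]; field_simp
        rw [abs_of_pos hnz]
      have h2 : |c-1| * ‖W‖^2 ≤ ((1/4)*(1-(1/2)^k)) * ‖W‖^2 := by rw [h1]; exact hP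
      exact le_of_mul_le_mul_right h2 hnz
    -- key numeric bound
    have hkey : 5*‖r‖ + ‖ζ‖ ≤ (1/2)^(k+3)*‖W1‖ := by
      have h1 : (5*‖r‖ + ‖ζ‖)*‖W‖ ≤ 5*((50*b)^k - b^k) + (2*b)^(k+1)*(2*(5^k*5^k)) := by
        have ha : 5*(‖r‖*‖W‖) ≤ 5*((50*b)^k - b^k) := by
          rw [hrw]; linarith [hQ]
        have hb : ‖ζ‖*‖W‖ ≤ (2*b)^(k+1)*(2*(5^k*(5:ℝ)^k)) := by
          calc ‖ζ‖*‖W‖ ≤ ((2*b)^(k+1) * (2*‖W‖))*‖W‖ :=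
                mul_le_mul_of_nonneg_right hζ (norm_nonneg W)
            _ = (2*b)^(k+1) * (2*(‖W‖*‖W‖)) := by ring
            _ ≤ (2*b)^(k+1)*(2*(5^k*(5:ℝ)^k)) := by
                apply mul_le_mul_of_nonneg_left _ (by positivity)
                have : ‖W‖*‖W‖ ≤ 5^k*(5:ℝ)^k := by nlinarith [norm_nonneg W]
                linarith
        have e : (5*‖r‖ + ‖ζ‖)*‖W‖ = 5*(‖r‖*‖W‖) + ‖ζ‖*‖W‖ := by ring
        rw [e]; linarith [ha, hb]
      have h2 := N2 hκ0 hκ5 hb0 hbκ k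
      have h3 : (1/2)^(k+3) * (κ^(k+1) * κ^k) ≤ ((1/2)^(k+3)*‖W1‖)*‖W‖ := by
        have hp : (0:ℝ) ≤ (1/2)^(k+3) := by positivity
        have hm : κ^(k+1) * κ^k ≤ ‖W1‖*‖W‖ :=
          mul_le_mul hk2 hk1 (by positivity) (norm_nonneg _)
        calc (1/2)^(k+3) * (κ^(k+1) * κ^k) ≤ (1/2)^(k+3) * (‖W1‖*‖W‖) :=
              mul_le_mul_of_nonneg_left hm hp
          _ = ((1/2)^(k+3)*‖W1‖)*‖W‖ := by ring
      have h4 : (5*‖r‖ + ‖ζ‖)*‖W‖ ≤ ((1/2)^(k+3)*‖W1‖)*‖W‖ := by linarith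
      exact le_of_mul_le_mul_right h4 hWpos
    have habs : |⟪W1', W1⟫ - ‖W1‖^2| ≤ |c-1| *‖W1‖^2 + (5*‖r‖ + ‖ζ‖)*‖W1‖ := by
      have hid : ⟪W1', W1⟫ - ‖W1‖^2 = (c-1)*‖W1‖^2 + (⟪A (k+1) r, W1⟫ + ⟪ζ, W1⟫) := by
        rw [hPid]; ring
      rw [hid]
      have h1 : |⟪A (k+1) r, W1⟫| ≤ 5*‖r‖*‖W1‖ := by
        calc |⟪A (k+1) r, W1⟫| ≤ ‖A (k+1) r‖*‖W1‖ := abs_real_inner_le_norm _ _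
          _ ≤ 5*‖r‖*‖W1‖ := by
              apply mul_le_mul_of_nonneg_right _ (norm_nonneg _)
              calc ‖A (k+1) r‖ ≤ ‖A (k+1)‖*‖r‖ := (A (k+1)).le_opNorm r
                _ ≤ 5*‖r‖ := mul_le_mul_of_nonneg_right hA5 (norm_nonneg r)
      have h2 : |⟪ζ, W1⟫| ≤ ‖ζ‖*‖W1‖ := abs_real_inner_le_norm _ _
      calc |(c-1)*‖W1‖^2 + (⟪A (k+1) r, W1⟫ + ⟪ζ, W1⟫)|
          ≤ |(c-1)*‖W1‖^2| + |⟪A (k+1) r, W1⟫ + ⟪ζ, W1⟫| := abs_add_le _ _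
        _ ≤ |(c-1)*‖W1‖^2| + (|⟪A (k+1) r, W1⟫| + |⟪ζ, W1⟫|) := by
            have := abs_add_le ⟪A (k+1) r, W1⟫ ⟪ζ, W1⟫
            linarith
        _ ≤ |c-1| *‖W1‖^2 + (5*‖r‖ + ‖ζ‖)*‖W1‖ := by
            rw [abs_mul, abs_of_nonneg (sq_nonneg ‖W1‖)]
            have e2 : (5*‖r‖ + ‖ζ‖)*‖W1‖ = 5*‖r‖*‖W1‖ + ‖ζ‖*‖W1‖ := by ring
            linarith [h1, h2]
    calc |⟪W1', W1⟫ - ‖W1‖^2| ≤ |c-1| *‖W1‖^2 + (5*‖r‖ + ‖ζ‖)*‖W1‖ := habs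
      _ ≤ ((1/4)*(1-(1/2)^k))*‖W1‖^2 + ((1/2)^(k+3)*‖W1‖)*‖W1‖ := by
          have h1 : |c-1| *‖W1‖^2 ≤ ((1/4)*(1-(1/2)^k))*‖W1‖^2 :=
            mul_le_mul_of_nonneg_right hc1 (sq_nonneg _)
          have h2 : (5*‖r‖ + ‖ζ‖)*‖W1‖ ≤ ((1/2)^(k+3)*‖W1‖)*‖W1‖ :=
            mul_le_mul_of_nonneg_right hkey (norm_nonneg _)
          linarith
      _ = (1/4)*(1-(1/2)^(k+1))*‖W1‖^2 := by ring
end Main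
end MPL

open MPL in
/-- Under the hypotheses of the Matrix Perturbation Lemma, the perturbed products admit
strongly contracted directions: for every `κ ∈ (0, 5]` there is `b₀ ∈ (0, κ)` such that
for every `b ∈ (0, b₀)` there is `λ` with `b < λ < min 1 κ` such that for all `n ≥ 1`,
every unit vector `v`, and all matrices `A₁, …, Aₙ`, `A₁', …, Aₙ'` of determinant `b`
and norm at most `5`, if `‖Aⁱ v‖ ≥ κⁱ` and `‖Aᵢ - Aᵢ'‖ < λⁱ` for all `1 ≤ i ≤ n`,
then for every `1 ≤ i ≤ n` there is a unit vector `eᵢ` with `‖A'ⁱ eᵢ‖ ≤ 2 (b/κ)ⁱ`. -/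
theorem matrix_perturbation_contracted_direction :
    ∀ κ : ℝ, 0 < κ → κ ≤ 5 →
    ∃ b₀ : ℝ, 0 < b₀ ∧ b₀ < κ ∧
    ∀ b : ℝ, 0 < b → b < b₀ →
    ∃ lam : ℝ, b < lam ∧ lam < min 1 κ ∧
    ∀ n : ℕ, 1 ≤ n → ∀ v : E2, ‖v‖ = 1 →
    ∀ A A' : ℕ → (E2 →L[ℝ] E2),
    (∀ i : ℕ, 1 ≤ i → i ≤ n →
      LinearMap.det (A i : E2 →ₗ[ℝ] E2) = b ∧ LinearMap.det (A' i : E2 →ₗ[ℝ] E2) = b ∧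
      ‖A i‖ ≤ 5 ∧ ‖A' i‖ ≤ 5) →
    (∀ i : ℕ, 1 ≤ i → i ≤ n → κ ^ i ≤ ‖matProd A i v‖ ∧ ‖A i - A' i‖ < lam ^ i) →
    ∀ i : ℕ, 1 ≤ i → i ≤ n →
      ∃ e : E2, ‖e‖ = 1 ∧ ‖matProd A' i e‖ ≤ 2 * (b / κ) ^ i := by
  intro κ hκ0 hκ5
  have hk4 : κ^4 ≤ 125*κ := kappa4 hκ0 hκ5
  refine ⟨min (1/2) (κ^4/100000), lt_min (by norm_num) (by positivity), ?_, ?_⟩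
  · have h125 : κ^4/100000 < κ := by
      rw [div_lt_iff₀ (by norm_num : (0:ℝ) < 100000)]
      nlinarith [hκ0]
    exact lt_of_le_of_lt (min_le_right _ _) h125
  · intro b hb0 hbb0
    have hb12 : b < 1/2 := lt_of_lt_of_le hbb0 (min_le_left _ _)
    have hbκ : b ≤ κ^4/100000 := le_of_lt (lt_of_lt_of_le hbb0 (min_le_right _ _))
    have hbκ' : 100000 * b ≤ κ^4 := by
      rw [le_div_iff₀ (by norm_num : (0:ℝ) < 100000)] at hbκ
      linarith
    refine ⟨2*b, by linarith, ?_, ?_⟩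
    · exact lt_min (by linarith) (by nlinarith [hκ0])
    · intro n hn v hv A A' hAs hgrow i hi1 hin
      obtain ⟨hQ, hP⟩ := key_induction hκ0 hκ5 hb0 hbκ n v hv A A' hAs hgrow i hin
      have hwlow_i : κ^i ≤ ‖matProd A i v‖ := (hgrow i hi1 hin).1
      have hnormpos : (0:ℝ) < ‖matProd A i v‖ := lt_of_lt_of_le (pow_pos hκ0 i) hwlow_i
      have hPlow : (3/4)*‖matProd A i v‖^2 ≤ ⟪matProd A' i v, matProd A i v⟫ := by
        have h1 := (abs_le.mp hP).1
        have h2 : (0:ℝ) ≤ (1/2)^i := by positivity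
        nlinarith [sq_nonneg ‖matProd A i v‖, mul_nonneg h2 (sq_nonneg ‖matProd A i v‖)]
      have hCS : ⟪matProd A' i v, matProd A i v⟫ ≤ ‖matProd A' i v‖*‖matProd A i v‖ :=
        real_inner_le_norm _ _
      have hstep : (3/4)*‖matProd A i v‖ ≤ ‖matProd A' i v‖ := by
        have h' : (3/4)*‖matProd A i v‖ * ‖matProd A i v‖ ≤ ‖matProd A' i v‖ * ‖matProd A i v‖ := by
          nlinarith [le_trans hPlow hCS]
        exact le_of_mul_le_mul_right h' hnormpos
      have hlow : (3/4)*κ^i ≤ ‖matProd A' i v‖ := by linarith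
      have hdet : LinearMap.det ((matProd A' i : E2 →L[ℝ] E2) : E2 →ₗ[ℝ] E2) = b^i :=
        det_matProd A' b n (fun l h1 h2 => (hAs l h1 h2).2.1) i hin
      obtain ⟨e, he1, he2⟩ :=
        exists_contracted (matProd A' i) v hv ((3/4)*κ^i) (by positivity) hlow
      refine ⟨e, he1, ?_⟩
      rw [hdet] at he2
      have hfin : |b^i| / ((3/4)*κ^i) ≤ 2*(b/κ)^i := by
        rw [abs_of_nonneg (pow_nonneg (le_of_lt hb0) i), div_pow,
          div_le_iff₀ (by positivity : (0:ℝ) < (3/4)*κ^i)]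
        have hκi : (0:ℝ) < κ^i := pow_pos hκ0 i
        have e1 : 2*(b^i/κ^i)*((3/4)*κ^i) = (3/2)*b^i := by field_simp; ring
        rw [e1]
        nlinarith [pow_nonneg (le_of_lt hb0) i]
      exact le_trans he2 hfin
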